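/- Let ι be a finitely generated abelian group, A a noetherian commutative ring graded by ι, and I a homogeneous ideal of A. Then the set of G-associated G-primes of I, namely { I : J | J a homogeneous ideal of A such that the colon ideal I : J is G-prime }, equals { 𝔭* | 𝔭 an associated prime of the A-module A⧸I }. -/

import Mathlib

/-- A homogeneous ideal `P` of a graded ring `A` is `G`-prime if `P = 𝔭*`
(the homogeneous core) for some prime ideal `𝔭` of `A`. -/
def Ideal.IsGPrime {ι : Type*} [AddCommGroup ι] [DecidableEq ι] {A : Type*} [CommRing A]
    (𝒜 : ι → AddSubgroup A) [GradedRing 𝒜] (P : Ideal A) : Prop :=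
  ∃ 𝔭 : Ideal A, 𝔭.IsPrime ∧ P = (𝔭.homogeneousCore 𝒜).toIdeal

theorem mem_colon_span {A : Type*} [CommRing A] {I : Ideal A} {S : Set A} {a : A}
    (h : ∀ s ∈ S, a * s ∈ I) : a ∈ I.colon (Ideal.span S) := by
  rw [Submodule.mem_colon]
  intro p hp
  induction hp using Submodule.span_induction with
  | mem s hs => exact h s hs
  | zero => simp
  | add p q _ _ hp hq => rw [smul_add]; exact I.add_mem hp hq
  | smul r p _ hp =>
      show a * (r * p) ∈ I
      rw [mul_left_comm]
      exact I.mul_mem_left r hp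

open Submodule in
theorem isAssociatedPrime_of_mem_minimalPrimes_annihilator
    {R : Type*} [CommRing R] [IsNoetherianRing R] {M : Type*} [AddCommGroup M]
    [Module R M] [Module.Finite R M] {𝔭 : Ideal R}
    (h : 𝔭 ∈ (Module.annihilator R M).minimalPrimes) :
    IsAssociatedPrime 𝔭 M := by
  classical
  obtain ⟨⟨hp, hle⟩, hmin⟩ := h
  have hone : (1 : R) ∉ 𝔭 := (Ideal.ne_top_iff_one _).mp hp.ne_top
  have hmul : ∀ a b : R, a ∉ 𝔭 → b ∉ 𝔭 → a * b ∉ 𝔭 :=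
    fun a b ha hb hab => (hp.mem_or_mem hab).elim ha hb
  -- the submodule of elements killed by something outside 𝔭
  set N : Submodule R M :=
    { carrier := {m | ∃ s, s ∉ 𝔭 ∧ s • m = 0}
      add_mem' := by
        rintro a b ⟨s, hs, hsa⟩ ⟨t, ht, htb⟩
        refine ⟨s * t, hmul s t hs ht, ?_⟩
        rw [smul_add, mul_smul, smul_comm s t a, hsa, smul_zero, mul_smul, htb, smul_zero,
          add_zero]
      zero_mem' := ⟨1, hone, smul_zero 1⟩
      smul_mem' := by
        rintro r m ⟨s, hs, h0⟩
        exact ⟨s, hs, by rw [smul_comm, h0, smul_zero]⟩ } with hNdef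
  have hNmem : ∀ m : M, m ∈ N ↔ ∃ s, s ∉ 𝔭 ∧ s • m = 0 := fun m => Iff.rfl
  have hNtop : N ≠ ⊤ := by
    intro hNT
    obtain ⟨S, hS⟩ := Module.Finite.fg_top (R := R) (M := M)
    have hmem : ∀ m : M, ∃ s, s ∉ 𝔭 ∧ s • m = 0 := fun m =>
      (hNmem m).mp (hNT ▸ Submodule.mem_top)
    choose f hf1 hf2 using hmem
    have hs : (∏ m ∈ S, f m) ∉ 𝔭 :=
      Finset.prod_induction f (· ∉ 𝔭) hmul hone (fun m _ => hf1 m)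
    have hann : (∏ m ∈ S, f m) ∈ Module.annihilator R M := by
      rw [Module.mem_annihilator]
      have hker : (⊤ : Submodule R M) ≤ LinearMap.ker (LinearMap.lsmul R M (∏ m ∈ S, f m)) := by
        rw [← hS]
        refine Submodule.span_le.mpr ?_
        intro m hm
        simp only [SetLike.mem_coe, LinearMap.mem_ker, LinearMap.lsmul_apply]
        rw [← Finset.prod_erase_mul _ _ hm, mul_smul, hf2, smul_zero]
      intro m
      simpa using hker (Submodule.mem_top (x := m))
    exact hs (hle hann)
  have : Nontrivial (M ⧸ N) := Submodule.Quotient.nontrivial_iff.mpr hNtop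
  obtain ⟨𝔮, hq'⟩ := associatedPrimes.nonempty R (M ⧸ N)
  obtain ⟨hq, y, hy⟩ := isAssociatedPrime_iff.mp hq'
  obtain ⟨x, rfl⟩ := Submodule.Quotient.mk_surjective N y
  have hqmem : ∀ r, r ∈ 𝔮 ↔ r • x ∈ N := by
    intro r
    rw [hy, Submodule.mem_colon_singleton, Submodule.mem_bot, ← Submodule.Quotient.mk_smul,
      Submodule.Quotient.mk_eq_zero]
  have hq_le_p : 𝔮 ≤ 𝔭 := by
    intro t ht
    by_contra htp
    obtain ⟨s, hs, h0⟩ := (hqmem t).mp ht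
    have hxN : x ∈ N := ⟨s * t, hmul s t hs htp, by rw [mul_smul]; exact h0⟩
    have : (Submodule.Quotient.mk x : M ⧸ N) = 0 := (Submodule.Quotient.mk_eq_zero N).mpr hxN
    rw [this, Submodule.colon_singleton_zero] at hy
    exact hq.ne_top hy
  have hann_le_q : Module.annihilator R M ≤ 𝔮 := by
    intro r hr
    rw [hy, Submodule.mem_colon_singleton, Submodule.mem_bot, ← Submodule.Quotient.mk_smul,
      Module.mem_annihilator.mp hr x, Submodule.Quotient.mk_zero]
  have hpq : 𝔭 = 𝔮 := le_antisymm (hmin ⟨hq, hann_le_q⟩ hq_le_p) hq_le_p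
  have hpmem : ∀ r, r ∈ 𝔭 ↔ r • x ∈ N := fun r => hpq ▸ hqmem r
  obtain ⟨T, hT⟩ := IsNoetherian.noetherian 𝔭
  have hTm : ∀ a : T, (a : R) • x ∈ N := fun a =>
    (hpmem a).mp (hT ▸ Submodule.subset_span a.2)
  choose g hg1 hg2 using fun a : T => hTm a
  have hs : (∏ a ∈ T.attach, g a) ∉ 𝔭 :=
    Finset.prod_induction g (· ∉ 𝔭) hmul hone (fun a _ => hg1 a)
  refine isAssociatedPrime_iff.mpr ⟨hp, (∏ a ∈ T.attach, g a) • x, le_antisymm ?_ ?_⟩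
  · rw [← hT]
    refine Submodule.span_le.mpr ?_
    intro a ha
    rw [SetLike.mem_coe, Submodule.mem_colon_singleton, Submodule.mem_bot]
    have key : g ⟨a, ha⟩ • a • x = 0 := hg2 ⟨a, ha⟩
    have step : a • (∏ b ∈ T.attach, g b) • x
        = (∏ b ∈ T.attach.erase ⟨a, ha⟩, g b) • g ⟨a, ha⟩ • a • x := by
      rw [← mul_smul, ← mul_smul, ← mul_smul, ← Finset.prod_erase_mul _ _
        (Finset.mem_attach T ⟨a, ha⟩)]
      ring_nf
    rw [step, key, smul_zero]
  · intro r hr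
    rw [Submodule.mem_colon_singleton, Submodule.mem_bot] at hr
    have hmemN : (r * ∏ a ∈ T.attach, g a) • x ∈ N := by
      rw [mul_smul, hr]; exact N.zero_mem
    have hrs := (hpmem _).mpr hmemN
    exact (hp.mem_or_mem hrs).resolve_right hs

open DirectSum

/-- Let `ι` be a finitely generated abelian group, `A` a noetherian commutative ring graded by
`ι`, and `I` a homogeneous ideal of `A`.  Then the set of `G`-associated `G`-primes of `I`,
namely the ideals of the form `I : J` with `J` homogeneous and `I : J` `G`-prime, equals the
set `{𝔭* | 𝔭 an associated prime of A ⧸ I}`. -/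
theorem gAssociated_eq_homogeneousCore_associatedPrimes
    {ι : Type*} [AddCommGroup ι] [AddGroup.FG ι] [DecidableEq ι]
    {A : Type*} [CommRing A] [IsNoetherianRing A]
    (𝒜 : ι → AddSubgroup A) [GradedRing 𝒜] (I : Ideal A) (hI : I.IsHomogeneous 𝒜) :
    {P : Ideal A | ∃ J : Ideal A, J.IsHomogeneous 𝒜 ∧
        (Submodule.colon I J).IsGPrime 𝒜 ∧ P = Submodule.colon I J}
      = {P : Ideal A | ∃ 𝔭 ∈ associatedPrimes A (A ⧸ I),
          P = (Ideal.homogeneousCore 𝒜 𝔭).toIdeal} := by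
  classical
  ext P
  constructor
  · rintro ⟨J, hJ, ⟨𝔮, hq, hPq⟩, rfl⟩
    have hq_le : Submodule.colon I J ≤ 𝔮 := hPq ▸ Ideal.toIdeal_homogeneousCore_le 𝒜 𝔮
    obtain ⟨𝔭, h𝔭min, h𝔭q⟩ := Ideal.exists_minimalPrimes_le hq_le
    -- the colon ideal is the annihilator of the module (I+J)/I
    have hfin : Module.Finite A ↥(Submodule.map I.mkQ J) :=
      Module.Finite.iff_fg.mpr (IsNoetherian.noetherian _)
    have hcolon : Submodule.colon I J
        = Module.annihilator A ↥(Submodule.map I.mkQ J) := by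
      rw [← Submodule.annihilator_map_mkQ_eq_colon]
    have hass : IsAssociatedPrime 𝔭 (A ⧸ I) := by
      have := isAssociatedPrime_of_mem_minimalPrimes_annihilator (hcolon ▸ h𝔭min)
      exact this.map_of_injective (Submodule.map I.mkQ J).subtype
        (Submodule.injective_subtype _)
    refine ⟨𝔭, hass, ?_⟩
    have hhom : (Submodule.colon I J).IsHomogeneous 𝒜 :=
      hPq ▸ (𝔮.homogeneousCore 𝒜).isHomogeneous
    have h1 : Submodule.colon I J ≤ (𝔭.homogeneousCore 𝒜).toIdeal := by
      conv_lhs => rw [← hhom.toIdeal_homogeneousCore_eq_self]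
      exact Ideal.homogeneousCore_mono 𝒜 h𝔭min.1.2
    have h2 : (𝔭.homogeneousCore 𝒜).toIdeal ≤ Submodule.colon I J := by
      rw [hPq]
      exact Ideal.homogeneousCore_mono 𝒜 h𝔭q
    exact le_antisymm h1 h2
  · rintro ⟨𝔭, h𝔭, rfl⟩
    obtain ⟨hp, y, hy⟩ := isAssociatedPrime_iff.mp h𝔭
    obtain ⟨x, rfl⟩ := Submodule.Quotient.mk_surjective I y
    have hpmem : ∀ r, r ∈ 𝔭 ↔ r * x ∈ I := by
      intro r
      rw [hy, Submodule.mem_colon_singleton, Submodule.mem_bot, ← Submodule.Quotient.mk_smul,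
        Submodule.Quotient.mk_eq_zero, smul_eq_mul]
    set J : Ideal A := Ideal.span (Set.range fun i => (decompose 𝒜 x i : A)) with hJdef
    have hJ : J.IsHomogeneous 𝒜 := by
      refine Ideal.homogeneous_span 𝒜 _ ?_
      rintro _ ⟨i, rfl⟩
      exact ⟨i, SetLike.coe_mem _⟩
    have hxi : ∀ i, (decompose 𝒜 x i : A) ∈ J := fun i =>
      Ideal.subset_span ⟨i, rfl⟩
    have hcolon_eq : Submodule.colon I J = (𝔭.homogeneousCore 𝒜).toIdeal := by
      apply le_antisymm
      · intro a ha
        rw [← DirectSum.sum_support_decompose 𝒜 a]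
        refine Ideal.sum_mem _ fun d _ => ?_
        refine Ideal.mem_homogeneousCore_of_homogeneous_of_mem ⟨d, SetLike.coe_mem _⟩ ?_
        rw [hpmem]
        have hsum : (decompose 𝒜 a d : A) * x
            = ∑ i ∈ (decompose 𝒜 x).support, (decompose 𝒜 a d : A) * (decompose 𝒜 x i : A) := by
          rw [← Finset.mul_sum, DirectSum.sum_support_decompose]
        rw [hsum]
        refine Ideal.sum_mem _ fun i _ => ?_
        have hmul : (decompose 𝒜 a d : A) * (decompose 𝒜 x i : A)
            = (decompose 𝒜 (a * (decompose 𝒜 x i : A)) (d + i) : A) :=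
          (DirectSum.coe_decompose_mul_add_of_right_mem 𝒜 (SetLike.coe_mem _)).symm
        rw [hmul]
        exact hI _ (Submodule.mem_colon.mp ha _ (hxi i))
      · refine Ideal.span_le.mpr ?_
        rintro _ ⟨z, hz, rfl⟩
        obtain ⟨d, hd⟩ := z.2
        refine mem_colon_span ?_
        rintro _ ⟨i, rfl⟩
        have hmul : (z : A) * (decompose 𝒜 x i : A)
            = (decompose 𝒜 ((z : A) * x) (d + i) : A) :=
          (DirectSum.coe_decompose_mul_add_of_left_mem 𝒜 hd).symm
        rw [hmul]
        exact hI _ ((hpmem _).mp hz)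
    exact ⟨J, hJ, ⟨𝔭, hp, hcolon_eq⟩, hcolon_eq.symm⟩
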